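/- Let n ≥ 1, L > 0, and let ν be a probability measure on ℝⁿ such that the expected norm is infinite, i.e., ∫ ‖x‖ dν(x) = ∞ (the function x ↦ ‖x‖ is not integrable, with lower integral +∞). Define the commit reward r(x) = 1 − L‖x‖ and the abstain reward 0, and the per-round regret at input x under action y ∈ {abstain, commit} as max(r(x), 0) − (r(x) if y = commit, 0 if y = abstain). Then for any horizon T ≥ 1 and any measurable action rule y : (ℝⁿ)^T → {abstain, commit}^T that always commits on the first round (y(x)₁ = commit for all input sequences x), the expected total regret over T i.i.d. rounds with inputs drawn from ν is infinite: ∫ Σ_{t=1}^T [max(r(x_t),0) − (r(x_t) if y(x)_t = commit else 0)] d(ν^{⊗T})(x) = +∞. -/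

import Mathlib

open MeasureTheory

lemma pi_map_eval_aux {n T : ℕ} (hT : 0 < T) (ν : Measure (EuclideanSpace ℝ (Fin n)))
    [IsProbabilityMeasure ν] :
    (Measure.pi fun _ : Fin T => ν).map (Function.eval (⟨0, hT⟩ : Fin T)) = ν := by
  ext s hs
  rw [Measure.map_apply (f := Function.eval (⟨0, hT⟩ : Fin T)) (measurable_pi_apply _) hs]
  have : Function.eval (⟨0, hT⟩ : Fin T) ⁻¹' s =
      Set.pi Set.univ (Function.update (fun _ : Fin T => (Set.univ : Set (EuclideanSpace ℝ (Fin n)))) ⟨0, hT⟩ s) := by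
    ext x
    simp only [Set.mem_preimage, Set.mem_pi, Set.mem_univ, forall_true_left]
    constructor
    · intro hx j
      rcases eq_or_ne j ⟨0, hT⟩ with rfl | hj
      · simpa using hx
      · simp [Function.update_of_ne hj]
    · intro hx
      simpa using hx ⟨0, hT⟩
  rw [this, Measure.pi_pi]
  rw [Finset.prod_eq_single (⟨0, hT⟩ : Fin T)
    (fun j _ hj => by simp [Function.update_of_ne hj]) (by simp)]
  simp

/-- **The need for caution.** If the input distribution `ν` on `ℝⁿ` has infinite expected
norm (lower integral of the norm is `⊤`), then with commit reward `r x = 1 - L‖x‖` and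
abstain reward `0`, any measurable action rule over a horizon `T` that always commits on
the first round has infinite expected total regret under i.i.d. inputs from `ν`. -/
theorem stmt_0 (n : ℕ) (hn : 1 ≤ n) (L : ℝ) (hL : 0 < L)
    (ν : Measure (EuclideanSpace ℝ (Fin n))) [IsProbabilityMeasure ν]
    (hnorm : ∫⁻ x, ENNReal.ofReal ‖x‖ ∂ν = ⊤)
    (T : ℕ) (hT : 0 < T)
    (y : (Fin T → EuclideanSpace ℝ (Fin n)) → Fin T → Bool)
    (hy : Measurable y)
    (hfirst : ∀ x, y x ⟨0, hT⟩ = true) :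
    ∫⁻ x, ENNReal.ofReal
        (∑ t : Fin T,
          (max (1 - L * ‖x t‖) 0 - if y x t then 1 - L * ‖x t‖ else 0))
      ∂(Measure.pi fun _ : Fin T => ν) = ⊤ := by
  set μ : Measure (Fin T → EuclideanSpace ℝ (Fin n)) := Measure.pi fun _ : Fin T => ν
  have hprob : IsProbabilityMeasure μ := by infer_instance
  -- pointwise lower bound
  have key : ∀ x : Fin T → EuclideanSpace ℝ (Fin n),
      ENNReal.ofReal (L * ‖x ⟨0, hT⟩‖) - 1 ≤
      ENNReal.ofReal (∑ t : Fin T,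
          (max (1 - L * ‖x t‖) 0 - if y x t then 1 - L * ‖x t‖ else 0)) := by
    intro x
    have h1 : (max (1 - L * ‖x ⟨0, hT⟩‖) 0 - if y x ⟨0, hT⟩ then 1 - L * ‖x ⟨0, hT⟩‖ else 0)
        ≤ ∑ t : Fin T,
          (max (1 - L * ‖x t‖) 0 - if y x t then 1 - L * ‖x t‖ else 0) := by
      apply Finset.single_le_sum (f := fun t : Fin T =>
        (max (1 - L * ‖x t‖) 0 - if y x t then 1 - L * ‖x t‖ else 0))
        (fun t _ => ?_) (Finset.mem_univ _)
      rcases Bool.eq_false_or_eq_true (y x t) with h | h <;> simp [h]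
    have h2 : L * ‖x ⟨0, hT⟩‖ - 1 ≤
        (max (1 - L * ‖x ⟨0, hT⟩‖) 0 - if y x ⟨0, hT⟩ then 1 - L * ‖x ⟨0, hT⟩‖ else 0) := by
      rw [hfirst x]
      simp only [if_true]
      have := le_max_right (1 - L * ‖x ⟨0, hT⟩‖) 0
      linarith
    calc ENNReal.ofReal (L * ‖x ⟨0, hT⟩‖) - 1
        = ENNReal.ofReal (L * ‖x ⟨0, hT⟩‖ - 1) := by
          simp [ENNReal.ofReal_sub _ zero_le_one]
      _ ≤ _ := ENNReal.ofReal_le_ofReal (le_trans h2 h1)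
  -- integral of the lower bound is ⊤
  have hmeas : Measurable fun x : Fin T → EuclideanSpace ℝ (Fin n) =>
      ENNReal.ofReal (L * ‖x ⟨0, hT⟩‖) :=
    (measurable_const.mul ((measurable_pi_apply _).norm)).ennreal_ofReal
  have hint : ∫⁻ x, ENNReal.ofReal (L * ‖x ⟨0, hT⟩‖) ∂μ = ⊤ := by
    have := pi_map_eval_aux hT ν
    calc ∫⁻ x, ENNReal.ofReal (L * ‖x ⟨0, hT⟩‖) ∂μ
        = ∫⁻ z, ENNReal.ofReal (L * ‖z‖) ∂(μ.map (Function.eval (⟨0, hT⟩ : Fin T))) := by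
          rw [lintegral_map (f := fun z : EuclideanSpace ℝ (Fin n) => ENNReal.ofReal (L * ‖z‖)) (measurable_const.mul measurable_norm).ennreal_ofReal
            (measurable_pi_apply (⟨0, hT⟩ : Fin T))]
      _ = ∫⁻ z, ENNReal.ofReal L * ENNReal.ofReal ‖z‖ ∂ν := by
          rw [this]
          simp_rw [ENNReal.ofReal_mul hL.le]
      _ = ENNReal.ofReal L * ∫⁻ z, ENNReal.ofReal ‖z‖ ∂ν :=
          lintegral_const_mul _ measurable_norm.ennreal_ofReal
      _ = ⊤ := by rw [hnorm, ENNReal.mul_top (by simp [hL])]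
  have hsub : ∫⁻ x, ENNReal.ofReal (L * ‖x ⟨0, hT⟩‖) ∂μ - ∫⁻ _x, (1 : ENNReal) ∂μ ≤
      ∫⁻ x, (ENNReal.ofReal (L * ‖x ⟨0, hT⟩‖) - 1) ∂μ :=
    lintegral_sub_le _ _ measurable_const
  have h1 : ∫⁻ _x, (1 : ENNReal) ∂μ = 1 := by simp
  rw [hint, h1] at hsub
  rw [(by simp : (⊤ : ENNReal) - 1 = ⊤)] at hsub
  exact top_le_iff.mp (le_trans hsub (lintegral_mono key))
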